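/- arXiv:2303.06258 — 5 statements merged into one kernel-verified Lean document; each statement's English description precedes it below -/
import Mathlib

section
/- Let μ be a probability measure on a space S and J : S → ℝ a measurable function. For ε ∈ [0,1], the probability under μ^N of drawing N i.i.d. samples s₁,…,s_N such that μ{s : J(s) ≥ min_i J(s_i)} ≥ 1−ε is at least 1−(1−ε)^N. -/
open MeasureTheory ENNReal

lemma aux_quantile {S : Type*} [MeasurableSpace S] (μ : Measure S) (J : S → ℝ)
    (c : ℝ≥0∞) : μ {x | μ {y | J x ≤ J y} < c} ≤ c := by
  set G : ℝ → ℝ≥0∞ := fun t => μ {y | t ≤ J y} with hG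
  have hGanti : Antitone G := fun a b hab =>
    measure_mono (fun y hy => le_trans hab hy)
  set T : Set ℝ := {t | G t < c} with hT
  have hTup : ∀ t ∈ T, ∀ t', t ≤ t' → t' ∈ T :=
    fun t ht t' h => lt_of_le_of_lt (hGanti h) ht
  have hBsub : ∀ (t : ℕ → ℝ), Antitone t → (∀ n, t n ∈ T) →
      μ (⋃ n, {x | t n ≤ J x}) ≤ c := by
    intro t hanti htT
    have hmono : Monotone (fun n => {x | t n ≤ J x}) := by
      intro n m h x hx
      exact le_trans (hanti h) hx
    rw [Directed.measure_iUnion hmono.directed_le]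
    exact iSup_le fun n => (htT n).le
  by_cases hne : T.Nonempty
  · by_cases hbdd : BddBelow T
    · set t₀ := sInf T with ht₀
      by_cases hmem : t₀ ∈ T
      · refine le_trans (measure_mono ?_) hmem.le
        intro x hx
        exact csInf_le hbdd hx
      · refine le_trans (measure_mono ?_) (hBsub (fun n => t₀ + 1/(n+1)) ?_ ?_)
        · intro x hx
          have hJT : J x ∈ T := hx
          have h1 : t₀ ≤ J x := csInf_le hbdd hJT
          have h2 : t₀ < J x := lt_of_le_of_ne h1 (fun h => hmem (h ▸ hJT))
          obtain ⟨n, hn⟩ := exists_nat_one_div_lt (sub_pos.mpr h2)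
          exact Set.mem_iUnion.mpr ⟨n, by simp only [Set.mem_setOf_eq]; linarith⟩
        · intro n m h
          have hnm : (n:ℝ) ≤ m := Nat.cast_le.mpr h
          have : (1:ℝ)/(m+1) ≤ 1/(n+1) := by
            apply one_div_le_one_div_of_le
            · positivity
            · linarith
          simp only; linarith
        · intro n
          have hpos : (0:ℝ) < 1/(n+1) := by positivity
          obtain ⟨r, hr, hrlt⟩ := (csInf_lt_iff hbdd hne).mp (by linarith : sInf T < t₀ + 1/(n+1))
          exact hTup r hr _ hrlt.le
    · refine le_trans (measure_mono ?_) (hBsub (fun n => -(n:ℝ)) ?_ ?_)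
      · intro x hx
        obtain ⟨n, hn⟩ := exists_nat_ge (-(J x))
        exact Set.mem_iUnion.mpr ⟨n, by simp only [Set.mem_setOf_eq]; linarith⟩
      · intro n m h
        simp only [neg_le_neg_iff]
        exact_mod_cast h
      · intro n
        rcases not_bddBelow_iff.mp hbdd (-(n:ℝ)) with ⟨r, hr, hrlt⟩
        exact hTup r hr _ hrlt.le
  · have : {x | μ {y | J x ≤ J y} < c} = ∅ := by
      ext x
      simp only [Set.mem_setOf_eq, Set.mem_empty_iff_false, iff_false, not_lt]
      by_contra h
      exact hne ⟨J x, not_le.mp h⟩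
    simp [this]

theorem best_of_N_min_percentile
    {S : Type*} [MeasurableSpace S] (μ : Measure S) [IsProbabilityMeasure μ]
    (J : S → ℝ) (hJ : Measurable J) (N : ℕ) (hN : 0 < N)
    (ε : ℝ) (hε0 : 0 ≤ ε) (hε1 : ε ≤ 1) :
    (Measure.pi fun _ : Fin N => μ)
      {s : Fin N → S |
        μ {x : S | J x ≥ Finset.univ.inf' ⟨⟨0, hN⟩, Finset.mem_univ _⟩ (fun i => J (s i))}
          ≥ ENNReal.ofReal (1 - ε)}
      ≥ 1 - (ENNReal.ofReal (1 - ε)) ^ N := by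
  set c := ENNReal.ofReal (1 - ε) with hc
  set P := Measure.pi (fun _ : Fin N => μ) with hP
  set A := {s : Fin N → S |
      μ {x : S | J x ≥ Finset.univ.inf' ⟨⟨0, hN⟩, Finset.mem_univ _⟩ (fun i => J (s i))} ≥ c}
    with hA
  set B := {x : S | μ {y | J x ≤ J y} < c} with hB
  -- complement included in product of B's
  have hcompl : Aᶜ ⊆ Set.univ.pi (fun _ : Fin N => B) := by
    intro s hs i _
    simp only [hA, Set.mem_compl_iff, Set.mem_setOf_eq, not_le, ge_iff_le] at hs
    have hle : Finset.univ.inf' ⟨⟨0, hN⟩, Finset.mem_univ _⟩ (fun i => J (s i)) ≤ J (s i) :=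
      Finset.inf'_le _ (Finset.mem_univ i)
    refine lt_of_le_of_lt (measure_mono ?_) hs
    intro y hy
    exact le_trans hle hy
  have hμB : μ B ≤ c := aux_quantile μ J c
  have hPAc : P Aᶜ ≤ c ^ N := by
    refine le_trans (measure_mono hcompl) ?_
    rw [Measure.pi_pi]
    calc ∏ _i : Fin N, μ B ≤ ∏ _i : Fin N, c := Finset.prod_le_prod' (fun _ _ => hμB)
      _ = c ^ N := by simp
  have h1 : (1 : ℝ≥0∞) ≤ P A + P Aᶜ := by
    have : P Set.univ = 1 := measure_univ
    calc (1 : ℝ≥0∞) = P Set.univ := this.symm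
      _ = P (A ∪ Aᶜ) := by rw [Set.union_compl_self]
      _ ≤ P A + P Aᶜ := measure_union_le _ _
  have h2 : 1 - P Aᶜ ≤ P A := tsub_le_iff_right.mpr h1
  exact le_trans (tsub_le_tsub_left hPAc 1) h2
end

section
/- Let μ be a probability measure on S and J : S → ℝ measurable. For ε ∈ (0,1], with probability at least 1−(1−ε)^N over N i.i.d. samples from μ, any sample point s* achieving the minimum sampled cost satisfies μ{s : J(s) < J(s*)} ≤ ε; that is, the best-of-N sample lies in the 100(1−ε)-percentile with respect to minimizing J. -/
open MeasureTheory ENNReal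

lemma quantile_lower_bound {S : Type*} [MeasurableSpace S] (μ : Measure S)
    [IsProbabilityMeasure μ] (J : S → ℝ) (hJ : Measurable J)
    (e : ℝ≥0∞) (he0 : 0 < e) (he1 : e ≤ 1) :
    e ≤ μ {y | μ {x | J x < J y} ≤ e} := by
  set g : ℝ → ℝ≥0∞ := fun r => μ {x | J x < r} with hg
  have gmono : Monotone g := fun a b hab =>
    measure_mono (fun x hx => lt_of_lt_of_le hx hab)
  by_cases hTne : {r : ℝ | e < g r}.Nonempty
  · by_cases hbdd : BddBelow {r : ℝ | e < g r}
    · set q := sInf {r : ℝ | e < g r} with hq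
      have hq_lower : ∀ r < q, g r ≤ e := by
        intro r hr
        by_contra h
        exact absurd (csInf_le hbdd (not_le.1 h)) (not_le.2 hr)
      have hq_upper : ∀ r, q < r → e < g r := by
        intro r hr
        obtain ⟨r', hr', hr'lt⟩ := (csInf_lt_iff hbdd hTne).1 hr
        exact lt_of_lt_of_le hr' (gmono hr'lt.le)
      -- g q ≤ e by left continuity
      have hgq : g q ≤ e := by
        have hunion : {x | J x < q} = ⋃ n : ℕ, {x | J x < q - 1/(n+1)} := by
          ext x
          simp only [Set.mem_setOf_eq, Set.mem_iUnion]
          constructor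
          · intro hx
            obtain ⟨n, hn⟩ := exists_nat_one_div_lt (sub_pos.2 hx)
            exact ⟨n, by linarith⟩
          · rintro ⟨n, hn⟩
            have : (0:ℝ) < 1/(n+1) := by positivity
            linarith
        have hdir : Directed (· ⊆ ·) (fun n : ℕ => {x | J x < q - 1/(n+1)}) := by
          apply Monotone.directed_le
          intro a b hab x hx
          simp only [Set.mem_setOf_eq] at *
          have hab' : (a:ℝ) ≤ b := Nat.cast_le.2 hab
          have : (1:ℝ)/(b+1) ≤ 1/(a+1) := by
            apply one_div_le_one_div_of_le (by positivity)
            linarith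
          linarith
        calc g q = μ (⋃ n : ℕ, {x | J x < q - 1/(n+1)}) := by rw [hg]; simp only; rw [hunion]
          _ = ⨆ n : ℕ, g (q - 1/(n+1)) := Directed.measure_iUnion hdir
          _ ≤ e := iSup_le fun n => hq_lower _ (sub_lt_self q (by positivity))
      -- μ {J ≤ q} ≥ e by right continuity
      have hle : e ≤ μ {y | J y ≤ q} := by
        set A : ℕ → Set S := fun n => {y | J y < q + 1/(n+1)} with hA
        have hinter : {y | J y ≤ q} = ⋂ n : ℕ, A n := by
          ext y
          simp only [hA, Set.mem_setOf_eq, Set.mem_iInter]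
          constructor
          · intro hy n
            have : (0:ℝ) < 1/(n+1) := by positivity
            linarith
          · intro h
            by_contra hc
            obtain ⟨n, hn⟩ := exists_nat_one_div_lt (sub_pos.2 (not_le.1 hc))
            have := h n
            linarith
        have hanti : Antitone A := by
          intro a b hab y hy
          simp only [hA, Set.mem_setOf_eq] at *
          have hab' : (a:ℝ) ≤ b := Nat.cast_le.2 hab
          have : (1:ℝ)/(b+1) ≤ 1/(a+1) := by
            apply one_div_le_one_div_of_le (by positivity)
            linarith
          linarith
        have hmeas : ∀ n, NullMeasurableSet (A n) μ :=
          fun n => (hJ measurableSet_Iio).nullMeasurableSet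
        rw [hinter, Directed.measure_iInter hmeas hanti.directed_ge ⟨0, measure_ne_top μ _⟩]
        refine le_iInf fun n => (hq_upper _ ?_).le
        have : (0:ℝ) < 1/((n:ℝ)+1) := by positivity
        linarith
      calc e ≤ μ {y | J y ≤ q} := hle
        _ ≤ μ {y | g (J y) ≤ e} := measure_mono fun y hy => le_trans (gmono hy) hgq
    · -- unbounded below: g r > e for all r, contradiction
      exfalso
      have hall : ∀ r : ℝ, e < g r := by
        intro r
        rw [not_bddBelow_iff] at hbdd
        obtain ⟨r', hr', hlt⟩ := hbdd r
        exact lt_of_lt_of_le hr' (gmono hlt.le)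
      set A : ℕ → Set S := fun n => {x | J x < -(n:ℝ)} with hA
      have hempty : (⋂ n : ℕ, A n) = ∅ := by
        ext x
        simp only [hA, Set.mem_iInter, Set.mem_setOf_eq, Set.mem_empty_iff_false, iff_false,
          not_forall, not_lt]
        obtain ⟨n, hn⟩ := exists_nat_gt (-(J x))
        exact ⟨n, by linarith⟩
      have hanti : Antitone A := by
        intro a b hab x hx
        simp only [hA, Set.mem_setOf_eq] at *
        have : (a:ℝ) ≤ b := Nat.cast_le.2 hab
        linarith
      have hmeas : ∀ n, NullMeasurableSet (A n) μ :=
        fun n => (hJ measurableSet_Iio).nullMeasurableSet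
      have key := Directed.measure_iInter hmeas hanti.directed_ge ⟨0, measure_ne_top μ _⟩
      rw [hempty, measure_empty] at key
      have : e ≤ 0 := key ▸ le_iInf fun n => (hall _).le
      exact absurd this (by simpa using he0.ne')
  · -- g r ≤ e always
    have hall : ∀ r, g r ≤ e := by
      intro r
      by_contra h
      exact hTne ⟨r, not_le.1 h⟩
    have : {y | g (J y) ≤ e} = Set.univ := Set.eq_univ_of_forall fun y => hall _
    calc e ≤ 1 := he1
      _ = μ Set.univ := (measure_univ).symm
      _ = μ {y | g (J y) ≤ e} := by rw [this]

theorem best_of_N_percentile_membership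
    {S : Type*} [MeasurableSpace S] (μ : Measure S) [IsProbabilityMeasure μ]
    (J : S → ℝ) (hJ : Measurable J) (N : ℕ) (hN : 1 ≤ N)
    (ε : ℝ) (hε0 : 0 < ε) (hε1 : ε ≤ 1) :
    (Measure.pi fun _ : Fin N => μ)
      {s : Fin N → S |
        ∀ i : Fin N, (∀ j : Fin N, J (s i) ≤ J (s j)) →
          μ {x : S | J x < J (s i)} ≤ ENNReal.ofReal ε}
      ≥ 1 - (ENNReal.ofReal (1 - ε)) ^ N := by
  set e := ENNReal.ofReal ε with he
  have he0 : 0 < e := ENNReal.ofReal_pos.2 hε0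
  have he1 : e ≤ 1 := by
    rw [he, ← ENNReal.ofReal_one]
    exact ENNReal.ofReal_le_ofReal hε1
  set g : ℝ → ℝ≥0∞ := fun r => μ {x | J x < r} with hg
  have gmono : Monotone g := fun a b hab =>
    measure_mono (fun x hx => lt_of_lt_of_le hx hab)
  -- B : bad set for one sample
  set B : Set S := {y | e < g (J y)} with hB
  have hBmeas : MeasurableSet B := by
    have : B = J ⁻¹' {r | e < g r} := rfl
    rw [this]
    apply hJ
    apply Set.OrdConnected.measurableSet
    constructor
    intro a ha b hb c hc
    exact lt_of_lt_of_le ha (gmono hc.1)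
  have hBcompl : e ≤ μ Bᶜ := by
    have : Bᶜ = {y | g (J y) ≤ e} := by
      ext y; simp [hB, not_lt]
    rw [this]
    exact quantile_lower_bound μ J hJ e he0 he1
  have hBle : μ B ≤ 1 - e := by
    have h1 : μ B = 1 - μ Bᶜ := by
      rw [← prob_compl_eq_one_sub hBmeas.compl, compl_compl]
    rw [h1]
    exact tsub_le_tsub_left hBcompl 1
  set bad : Set (Fin N → S) := Set.pi Set.univ (fun _ => B) with hbad
  have hbadmeas : MeasurableSet bad := MeasurableSet.univ_pi fun _ => hBmeas
  have hbadmeasure : (Measure.pi fun _ : Fin N => μ) bad = (μ B) ^ N := by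
    rw [hbad, Measure.pi_pi]
    simp [Finset.prod_const]
  have hsub : badᶜ ⊆ {s : Fin N → S |
      ∀ i : Fin N, (∀ j : Fin N, J (s i) ≤ J (s j)) →
        μ {x : S | J x < J (s i)} ≤ ENNReal.ofReal ε} := by
    intro s hs i hi
    simp only [hbad, Set.mem_compl_iff, Set.mem_pi, Set.mem_univ, forall_true_left,
      not_forall] at hs
    obtain ⟨j, hj⟩ := hs
    have hj' : g (J (s j)) ≤ e := not_lt.1 hj
    exact le_trans (gmono (hi j)) hj'
  have h1e : ENNReal.ofReal (1 - ε) = 1 - e := by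
    rw [he, ENNReal.ofReal_sub _ hε0.le, ENNReal.ofReal_one]
  calc (Measure.pi fun _ : Fin N => μ) {s : Fin N → S |
        ∀ i : Fin N, (∀ j : Fin N, J (s i) ≤ J (s j)) →
          μ {x : S | J x < J (s i)} ≤ ENNReal.ofReal ε}
      ≥ (Measure.pi fun _ : Fin N => μ) badᶜ := measure_mono hsub
    _ = 1 - (Measure.pi fun _ : Fin N => μ) bad := prob_compl_eq_one_sub hbadmeas
    _ ≥ 1 - (1 - e) ^ N := by
        apply tsub_le_tsub_left
        rw [hbadmeasure]
        exact pow_le_pow_left' hBle N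
    _ = 1 - (ENNReal.ofReal (1 - ε)) ^ N := by rw [h1e]
end

section
/- Let μ be a probability measure on S and T : S → ℝ measurable. For ε ∈ [0,1], with probability at least 1−(1−ε)^N over N i.i.d. samples s₁,…,s_N from μ, the maximum sampled value ζ* = max_i T(s_i) satisfies μ{s : T(s) ≤ ζ*} ≥ 1−ε. -/
open MeasureTheory ENNReal

theorem best_of_N_max_runtime
    {S : Type*} [MeasurableSpace S] (μ : Measure S) [IsProbabilityMeasure μ]
    (T : S → ℝ) (hT : Measurable T) (N : ℕ) (hN : 0 < N)
    (ε : ℝ) (hε0 : 0 ≤ ε) (hε1 : ε ≤ 1) :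
    (Measure.pi fun _ : Fin N => μ)
      {s : Fin N → S |
        μ {x : S | T x ≤ Finset.univ.sup' ⟨⟨0, hN⟩, Finset.mem_univ _⟩ (fun i => T (s i))}
          ≥ ENNReal.ofReal (1 - ε)}
      ≥ 1 - (ENNReal.ofReal (1 - ε)) ^ N := by
  set p : ℝ≥0∞ := ENNReal.ofReal (1 - ε) with hp
  set G : ℝ → ℝ≥0∞ := fun t => μ {x : S | T x ≤ t} with hG
  have hGmono : Monotone G := fun a b hab =>
    measure_mono (fun x hx => le_trans hx hab)
  set U : Set ℝ := {t | G t < p} with hU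
  have hUlower : ∀ a b, a ≤ b → b ∈ U → a ∈ U := fun a b hab hb =>
    lt_of_le_of_lt (hGmono hab) hb
  set B : Set S := T ⁻¹' U with hBdef
  have hBmeas : MeasurableSet B := by
    apply hT
    have : U.OrdConnected := ⟨fun a ha b hb c hc => hUlower c b hc.2 hb⟩
    exact this.measurableSet
  -- key: μ B ≤ p
  have hBp : μ B ≤ p := by
    rcases Set.eq_empty_or_nonempty U with h | ⟨u, hu⟩
    · simp [hBdef, h]
    by_cases hall : ∀ t, t ∈ U
    · -- U = ℝ, then 1 ≤ p
      have h1 : (1 : ℝ≥0∞) ≤ p := by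
        have hun : (⋃ n : ℕ, {x : S | T x ≤ (n : ℝ)}) = Set.univ := by
          ext x; simp only [Set.mem_iUnion, Set.mem_univ, iff_true, Set.mem_setOf_eq]
          obtain ⟨n, hn⟩ := exists_nat_ge (T x)
          exact ⟨n, hn⟩
        have hdir : Directed (· ⊆ ·) (fun n : ℕ => {x : S | T x ≤ (n : ℝ)}) := by
          intro a b
          refine ⟨max a b, fun x hx => ?_, fun x hx => ?_⟩ <;>
            simp only [Set.mem_setOf_eq] at hx ⊢ <;>
            [exact le_trans hx (by exact_mod_cast le_max_left a b);
             exact le_trans hx (by exact_mod_cast le_max_right a b)]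
        have := Directed.measure_iUnion (μ := μ) (s := fun n : ℕ => {x : S | T x ≤ (n : ℝ)}) hdir
        rw [hun, measure_univ] at this
        rw [this]
        exact iSup_le fun n => le_of_lt (hall (n : ℝ))
      calc μ B ≤ 1 := prob_le_one
        _ ≤ p := h1
    · push_neg at hall
      obtain ⟨t₀, ht₀⟩ := hall
      have hbdd : BddAbove U := ⟨t₀, fun y hy => by
        by_contra hlt
        exact ht₀ (hUlower t₀ y (le_of_not_ge hlt) hy)⟩
      set c : ℝ := sSup U with hc
      by_cases hcU : c ∈ U
      · have : B ⊆ {x | T x ≤ c} := fun x hx => le_csSup hbdd hx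
        exact le_trans (measure_mono this) (le_of_lt hcU)
      · have hsub : B ⊆ ⋃ n : ℕ, {x : S | T x ≤ c - 1/(n+1)} := by
          intro x hx
          have hxc : T x < c := lt_of_le_of_ne (le_csSup hbdd hx)
            (fun h => hcU (h ▸ hx))
          obtain ⟨n, hn⟩ := exists_nat_one_div_lt (sub_pos.mpr hxc)
          refine Set.mem_iUnion.mpr ⟨n, ?_⟩
          show T x ≤ c - 1/(n+1)
          linarith
        have hdir : Directed (· ⊆ ·) (fun n : ℕ => {x : S | T x ≤ c - 1/(n+1)}) := by
          intro a b
          refine ⟨max a b, fun x hx => ?_, fun x hx => ?_⟩ <;>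
          · simp only [Set.mem_setOf_eq] at hx ⊢
            refine le_trans hx (sub_le_sub_left ?_ c)
            have h1 : (0:ℝ) < a + 1 := by positivity
            have h2 : (0:ℝ) < b + 1 := by positivity
            have h3 : (0:ℝ) < (max a b : ℕ) + 1 := by positivity
            rw [div_le_div_iff₀ h3 (by first | exact h1 | exact h2)]
            have := le_max_left a b
            have := le_max_right a b
            have hca : (a:ℝ) ≤ ((max a b : ℕ):ℝ) := Nat.cast_le.mpr (le_max_left a b)
            have hcb : (b:ℝ) ≤ ((max a b : ℕ):ℝ) := Nat.cast_le.mpr (le_max_right a b)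
            nlinarith
        have heq := Directed.measure_iUnion (μ := μ) (s := fun n : ℕ => {x : S | T x ≤ c - 1/(n+1)}) hdir
        refine le_trans (measure_mono hsub) ?_
        rw [heq]
        refine iSup_le fun n => ?_
        have hmem : c - 1/(n+1) ∈ U := by
          have hlt : c - 1/(n+1) < sSup U := by
            have : (0:ℝ) < 1/((n:ℝ)+1) := by positivity
            simpa [hc] using sub_lt_self c this
          obtain ⟨u', hu', hlt'⟩ := exists_lt_of_lt_csSup ⟨u, hu⟩ hlt
          exact hUlower _ _ (le_of_lt hlt') hu'
        exact le_of_lt hmem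
  -- the complement-of-product argument
  have hBmeasPi : MeasurableSet (Set.pi Set.univ (fun _ : Fin N => B)) :=
    MeasurableSet.univ_pi (fun _ => hBmeas)
  have hsub : (Set.pi Set.univ (fun _ : Fin N => B))ᶜ ⊆
      {s : Fin N → S |
        μ {x : S | T x ≤ Finset.univ.sup' ⟨⟨0, hN⟩, Finset.mem_univ _⟩ (fun i => T (s i))}
          ≥ p} := by
    intro s hs
    simp only [Set.mem_compl_iff, Set.mem_pi, Set.mem_univ, forall_true_left, not_forall] at hs
    obtain ⟨i, hi⟩ := hs
    have hip : p ≤ G (T (s i)) := not_lt.mp hi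
    have := hGmono (Finset.le_sup' (fun j => T (s j)) (Finset.mem_univ i))
    exact le_trans hip this
  calc (Measure.pi fun _ : Fin N => μ) {s : Fin N → S |
        μ {x : S | T x ≤ Finset.univ.sup' ⟨⟨0, hN⟩, Finset.mem_univ _⟩ (fun i => T (s i))}
          ≥ p}
      ≥ (Measure.pi fun _ : Fin N => μ) (Set.pi Set.univ (fun _ : Fin N => B))ᶜ :=
        measure_mono hsub
    _ = 1 - (Measure.pi fun _ : Fin N => μ) (Set.pi Set.univ (fun _ : Fin N => B)) :=
        prob_compl_eq_one_sub hBmeasPi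
    _ = 1 - (μ B) ^ N := by
        rw [Measure.pi_pi]
        simp [Finset.prod_const]
    _ ≥ 1 - p ^ N := tsub_le_tsub_left (pow_le_pow_left' hBp N) 1
end

section
/- Let μ be a probability measure on S and J : S → ℝ measurable and bounded. Let ζ*_N denote the minimum of J over N i.i.d. samples from μ. Then the expectation over μ^N of μ{s : J(s) < ζ*_N} is at most 1/(N+1); moreover, when the distribution of J under μ is atomless this expectation equals 1/(N+1). -/
open MeasureTheory ENNReal

private lemma measurePreserving_comp_perm {S : Type*} [MeasurableSpace S]
    (μ : Measure S) [SigmaFinite μ] {n : ℕ} (σ : Fin n ≃ Fin n) :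
    MeasurePreserving (fun s : Fin n → S => s ∘ σ)
      (Measure.pi fun _ => μ) (Measure.pi fun _ => μ) := by
  have hm : Measurable (fun s : Fin n → S => s ∘ σ) :=
    measurable_pi_lambda _ fun i => measurable_pi_apply _
  refine ⟨hm, ?_⟩
  refine (Measure.pi_eq fun t ht => ?_).symm
  rw [Measure.map_apply hm (MeasurableSet.univ_pi ht)]
  have hpre : (fun s : Fin n → S => s ∘ σ) ⁻¹' (Set.univ.pi t)
      = Set.univ.pi (fun j => t (σ.symm j)) := by
    ext s
    simp only [Set.mem_preimage, Set.mem_pi, Set.mem_univ, true_implies, Function.comp]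
    constructor
    · intro h j; simpa using h (σ.symm j)
    · intro h i; simpa using h (σ i)
  rw [hpre, Measure.pi_pi]
  exact Equiv.prod_comp σ.symm (fun i => μ (t i))

theorem expected_falsifying_volume
    {S : Type*} [MeasurableSpace S] (μ : Measure S) [IsProbabilityMeasure μ]
    (J : S → ℝ) (hJ : Measurable J) (M : ℝ) (hbdd : ∀ s, |J s| ≤ M)
    (N : ℕ) (hN : 0 < N) :
    (∫⁻ s : Fin N → S,
        μ {x : S | J x < Finset.univ.inf' ⟨⟨0, hN⟩, Finset.mem_univ _⟩ (fun i => J (s i))}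
        ∂(Measure.pi fun _ : Fin N => μ)) ≤ 1 / (N + 1) ∧
    ((∀ r : ℝ, μ {s : S | J s = r} = 0) →
      (∫⁻ s : Fin N → S,
          μ {x : S | J x < Finset.univ.inf' ⟨⟨0, hN⟩, Finset.mem_univ _⟩ (fun i => J (s i))}
          ∂(Measure.pi fun _ : Fin N => μ)) = 1 / (N + 1)) := by
  classical
  set ν : Measure (Fin N → S) := Measure.pi fun _ => μ with hνdef
  set π : Measure (Fin (N + 1) → S) := Measure.pi fun _ => μ with hπdef
  -- the event that coordinate j is the strict minimum
  set A : Fin (N + 1) → Set (Fin (N + 1) → S) :=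
    fun j => {s | ∀ i, i ≠ j → J (s j) < J (s i)} with hAdef
  have hAmeas : ∀ j, MeasurableSet (A j) := by
    intro j
    have h : A j = ⋂ i, {s : Fin (N + 1) → S | i ≠ j → J (s j) < J (s i)} := by
      ext s; simp [hAdef, Set.mem_iInter]
    rw [h]
    refine MeasurableSet.iInter fun i => ?_
    by_cases hij : i = j
    · simp [hij]
    · have : {s : Fin (N + 1) → S | i ≠ j → J (s j) < J (s i)}
          = {s : Fin (N + 1) → S | J (s j) < J (s i)} := by
        ext s; simp [hij]
      rw [this]
      exact measurableSet_lt (hJ.comp (measurable_pi_apply j)) (hJ.comp (measurable_pi_apply i))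
  have hdisj : Pairwise (Function.onFun Disjoint A) := by
    intro j k hjk
    refine Set.disjoint_left.mpr fun s hsj hsk => ?_
    have h1 := hsj k (Ne.symm hjk)
    have h2 := hsk j hjk
    exact absurd h1 (not_lt.mpr h2.le)
  -- symmetry
  have hsym : ∀ j, π (A j) = π (A 0) := by
    intro j
    have hmp := measurePreserving_comp_perm μ (σ := Equiv.swap (0 : Fin (N + 1)) j)
    have hpre : (fun s : Fin (N + 1) → S => s ∘ (Equiv.swap (0 : Fin (N + 1)) j)) ⁻¹' (A 0)
        = A j := by
      ext s
      simp only [Set.mem_preimage, hAdef, Set.mem_setOf_eq, Function.comp]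
      constructor
      · intro h i hi
        have hne : Equiv.swap (0 : Fin (N + 1)) j i ≠ 0 := by
          intro hc
          apply hi
          have := congrArg (Equiv.swap (0 : Fin (N + 1)) j) hc
          simpa [Equiv.swap_apply_self, Equiv.swap_apply_left] using this
        have := h (Equiv.swap (0 : Fin (N + 1)) j i) hne
        simpa [Equiv.swap_apply_left, Equiv.swap_apply_self] using this
      · intro h i hi
        have hne : Equiv.swap (0 : Fin (N + 1)) j i ≠ j := by
          intro hc
          apply hi
          have := congrArg (Equiv.swap (0 : Fin (N + 1)) j) hc
          simpa [Equiv.swap_apply_self, Equiv.swap_apply_right] using this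
        have := h (Equiv.swap (0 : Fin (N + 1)) j i) hne
        simpa [Equiv.swap_apply_left, Equiv.swap_apply_self] using this
    calc π (A j) = π ((fun s : Fin (N + 1) → S => s ∘ (Equiv.swap (0 : Fin (N + 1)) j)) ⁻¹' (A 0)) := by
          rw [hpre]
      _ = π (A 0) := hmp.measure_preimage (hAmeas 0).nullMeasurableSet
  have hsum : π (⋃ j, A j) = (N + 1 : ℝ≥0∞) * π (A 0) := by
    rw [measure_iUnion hdisj hAmeas]
    rw [tsum_fintype]
    simp only [hsym]
    rw [Finset.sum_const, Finset.card_univ, Fintype.card_fin, nsmul_eq_mul]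
    push_cast
    ring
  -- relating the integral to π (A 0)
  have hC : MeasurableSet {p : S × (Fin N → S) | ∀ k, J p.1 < J (p.2 k)} := by
    have h : {p : S × (Fin N → S) | ∀ k, J p.1 < J (p.2 k)}
        = ⋂ k, {p : S × (Fin N → S) | J p.1 < J (p.2 k)} := by
      ext p; simp
    rw [h]
    exact MeasurableSet.iInter fun k => measurableSet_lt (hJ.comp measurable_fst)
      (hJ.comp ((measurable_pi_apply k).comp measurable_snd))
  have hmp0 := MeasureTheory.measurePreserving_piFinSuccAbove (fun _ : Fin (N + 1) => μ) 0
  have hpre0 : (MeasurableEquiv.piFinSuccAbove (fun _ : Fin (N + 1) => S) 0) ⁻¹'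
      {p : S × (Fin N → S) | ∀ k, J p.1 < J (p.2 k)} = A 0 := by
    ext s
    simp only [Set.mem_preimage, Set.mem_setOf_eq, hAdef,
      MeasurableEquiv.piFinSuccAbove_apply, Fin.removeNth, Fin.succAbove_zero]
    constructor
    · intro h i hi
      obtain ⟨k, rfl⟩ := Fin.exists_succ_eq.mpr hi
      exact h k
    · intro h k
      exact h k.succ (Fin.succ_ne_zero k)
  have hLHS : (∫⁻ s : Fin N → S, μ {x : S | ∀ i, J x < J (s i)} ∂ν) = π (A 0) := by
    rw [← hpre0, hmp0.measure_preimage hC.nullMeasurableSet,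
      Measure.prod_apply_symm hC]
    rfl
  have hrew : (∫⁻ s : Fin N → S,
      μ {x : S | J x < Finset.univ.inf' ⟨⟨0, hN⟩, Finset.mem_univ _⟩ (fun i => J (s i))} ∂ν)
      = π (A 0) := by
    rw [← hLHS]
    refine lintegral_congr fun s => ?_
    congr 1
    ext x
    simp only [Set.mem_setOf_eq]
    exact (Finset.lt_inf'_iff (H := ⟨⟨0, hN⟩, Finset.mem_univ _⟩)).trans (by simp)
  constructor
  · -- the inequality
    have hle : (N + 1 : ℝ≥0∞) * π (A 0) ≤ 1 := by
      rw [← hsum]; exact prob_le_one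
    rw [hrew]
    rw [ENNReal.le_div_iff_mul_le (Or.inl (by simp)) (Or.inl (by simp))]
    rwa [mul_comm]
  · -- the equality under atomlessness
    intro hat
    -- pairs of equal values are null
    have hpair : ∀ i j : Fin (N + 1), i ≠ j → π {s : Fin (N + 1) → S | J (s i) = J (s j)} = 0 := by
      intro i j hij
      obtain ⟨k, hk⟩ := Fin.exists_succAbove_eq (Ne.symm hij)
      have hD : MeasurableSet {p : S × (Fin N → S) | J p.1 = J (p.2 k)} :=
        measurableSet_eq_fun (hJ.comp measurable_fst)
          (hJ.comp ((measurable_pi_apply k).comp measurable_snd))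
      have hmp := MeasureTheory.measurePreserving_piFinSuccAbove (fun _ : Fin (N + 1) => μ) i
      have hpre : (MeasurableEquiv.piFinSuccAbove (fun _ : Fin (N + 1) => S) i) ⁻¹'
          {p : S × (Fin N → S) | J p.1 = J (p.2 k)}
          = {s : Fin (N + 1) → S | J (s i) = J (s j)} := by
        ext s
        simp [MeasurableEquiv.piFinSuccAbove_apply, Fin.removeNth, hk]
      rw [← hpre, hmp.measure_preimage hD.nullMeasurableSet, Measure.prod_apply_symm hD]
      have hz : ∀ t : Fin N → S,
          μ ((fun x => (x, t)) ⁻¹' {p : S × (Fin N → S) | J p.1 = J (p.2 k)}) = 0 := by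
        intro t
        have : ((fun x => (x, t)) ⁻¹' {p : S × (Fin N → S) | J p.1 = J (p.2 k)})
            = {x : S | J x = J (t k)} := rfl
        rw [this]
        exact hat (J (t k))
      simp only [hz]
      simp
    -- the complement of the union is null
    have hcompl : π ((⋃ j, A j)ᶜ) = 0 := by
      have hsub : (⋃ j, A j)ᶜ ⊆
          ⋃ (i : Fin (N + 1)) (j : Fin (N + 1)) (_ : i ≠ j),
            {s : Fin (N + 1) → S | J (s i) = J (s j)} := by
        intro s hs
        simp only [Set.mem_compl_iff, Set.mem_iUnion, not_exists] at hs
        obtain ⟨j, hj⟩ := Finite.exists_min (fun j : Fin (N + 1) => J (s j))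
        have hsj : s ∉ A j := by
          intro hc
          exact hs j hc
        simp only [hAdef, Set.mem_setOf_eq, not_forall] at hsj
        obtain ⟨i, hi, hle⟩ := hsj
        have heq : J (s i) = J (s j) := le_antisymm (not_lt.mp hle) (hj i)
        exact Set.mem_iUnion.mpr ⟨i, Set.mem_iUnion.mpr ⟨j, Set.mem_iUnion.mpr ⟨hi, heq⟩⟩⟩
      refine measure_mono_null hsub ?_
      refine measure_iUnion_null fun i => measure_iUnion_null fun j => ?_
      by_cases hij : i = j
      · simp [hij]
      · simpa [hij] using hpair i j hij
    have hone : π (⋃ j, A j) = 1 := by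
      have h1 := measure_compl (MeasurableSet.iUnion hAmeas) (measure_ne_top π _)
      rw [hcompl, measure_univ] at h1
      exact le_antisymm prob_le_one (tsub_eq_zero_iff_le.mp h1.symm)
    have hkey : (N + 1 : ℝ≥0∞) * π (A 0) = 1 := by rw [← hsum, hone]
    rw [hrew]
    rw [ENNReal.eq_div_iff (by simp) (by simp)]
    exact hkey
end

section
/- Let D be a finite decision set with uniform probability measure μ and J : D → ℝ. If among N i.i.d. uniform samples the minimum cost is ζ*, then with μ^N-probability at least 1−(1−ε)^N, the fraction of elements of D with cost strictly less than ζ* is at most ε. -/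
open MeasureTheory ENNReal

theorem finite_uniform_percentile
    {D : Type*} [Fintype D] [Nonempty D] [MeasurableSpace D] [MeasurableSingletonClass D]
    (J : D → ℝ) (N : ℕ) (hN : 0 < N) (ε : ℝ) (hε0 : 0 < ε) (hε1 : ε ≤ 1) :
    (Measure.pi fun _ : Fin N => ((Fintype.card D : ℝ≥0∞)⁻¹ • Measure.count : Measure D))
      {s : Fin N → D |
        ((Finset.univ.filter fun d : D =>
            J d < Finset.univ.inf' ⟨⟨0, hN⟩, Finset.mem_univ _⟩ (fun i => J (s i))).card : ℝ)
          / (Fintype.card D : ℝ) ≤ ε}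
      ≥ 1 - (ENNReal.ofReal (1 - ε)) ^ N := by
  classical
  have hn : 0 < Fintype.card D := Fintype.card_pos
  have hnR : (0:ℝ) < Fintype.card D := by exact_mod_cast hn
  set μ : Measure D := ((Fintype.card D : ℝ≥0∞)⁻¹ • Measure.count) with hμ
  have hμuniv : μ Set.univ = 1 := by
    rw [hμ, Measure.smul_apply, smul_eq_mul, Measure.count_univ]
    rw [ENat.card_eq_coe_fintype_card, ENat.toENNReal_coe]
    exact ENNReal.inv_mul_cancel (by exact_mod_cast hn.ne') (natCast_ne_top _)
  haveI : IsProbabilityMeasure μ := ⟨hμuniv⟩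
  set A : Finset D := Finset.univ.filter
    (fun d => ε < ((Finset.univ.filter fun d' => J d' < J d).card : ℝ) / Fintype.card D)
    with hA
  have hAcard : (A.card : ℝ) ≤ (1 - ε) * Fintype.card D := by
    rcases A.eq_empty_or_nonempty with h | hne
    · rw [h]; simp; nlinarith
    · obtain ⟨d0, hd0A, hd0min⟩ := A.exists_min_image J hne
      set B : Finset D := Finset.univ.filter (fun d' => J d' < J d0) with hB
      have hdisj : Disjoint A B := by
        rw [Finset.disjoint_left]
        intro d hdA hdB
        have h1 : J d < J d0 := (Finset.mem_filter.mp hdB).2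
        have h2 : J d0 ≤ J d := hd0min d hdA
        linarith
      have hcard : A.card + B.card ≤ Fintype.card D := by
        rw [← Finset.card_union_of_disjoint hdisj]
        exact Finset.card_le_univ _
      have hεB : ε * Fintype.card D < B.card := by
        have := (Finset.mem_filter.mp hd0A).2
        rw [lt_div_iff₀ hnR] at this
        exact this
      have : (A.card : ℝ) + (B.card : ℝ) ≤ Fintype.card D := by exact_mod_cast hcard
      nlinarith
  have hμA : μ (A : Set D) ≤ ENNReal.ofReal (1 - ε) := by
    rw [hμ, Measure.smul_apply, smul_eq_mul, Measure.count_apply_finset]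
    have h1 : ((Fintype.card D : ℝ≥0∞))⁻¹ * A.card
        = ENNReal.ofReal ((A.card : ℝ) / Fintype.card D) := by
      rw [ENNReal.ofReal_div_of_pos hnR, ENNReal.ofReal_natCast, ENNReal.ofReal_natCast,
        div_eq_mul_inv, mul_comm]
    rw [h1]
    apply ENNReal.ofReal_le_ofReal
    rw [div_le_iff₀ hnR]
    linarith [hAcard]
  set P := (Measure.pi fun _ : Fin N => μ) with hP
  set S := {s : Fin N → D |
        ((Finset.univ.filter fun d : D =>
            J d < Finset.univ.inf' ⟨⟨0, hN⟩, Finset.mem_univ _⟩ (fun i => J (s i))).card : ℝ)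
          / (Fintype.card D : ℝ) ≤ ε} with hS
  have hsub : Sᶜ ⊆ Set.univ.pi (fun _ : Fin N => (A : Set D)) := by
    intro s hs
    simp only [hS, Set.mem_compl_iff, Set.mem_setOf_eq, not_le] at hs
    intro i _
    simp only [Finset.coe_filter, Set.mem_setOf_eq, hA, Finset.mem_coe,
      Finset.mem_filter, Finset.mem_univ, true_and]
    refine lt_of_lt_of_le hs ?_
    have hmono : (Finset.univ.filter fun d : D =>
        J d < Finset.univ.inf' ⟨⟨0, hN⟩, Finset.mem_univ _⟩ (fun i => J (s i))).card
        ≤ (Finset.univ.filter fun d' : D => J d' < J (s i)).card := by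
      apply Finset.card_le_card
      intro d hd
      simp only [Finset.mem_filter, Finset.mem_univ, true_and] at hd ⊢
      exact lt_of_lt_of_le hd (Finset.inf'_le _ (Finset.mem_univ i))
    gcongr

  have hcomp : P Sᶜ ≤ (ENNReal.ofReal (1 - ε)) ^ N := by
    refine le_trans (measure_mono hsub) ?_
    rw [hP, Measure.pi_pi]
    simp only [Finset.prod_const, Finset.card_univ, Fintype.card_fin]
    exact pow_le_pow_left' hμA N
  have h1 : (1:ℝ≥0∞) ≤ P S + P Sᶜ := by
    have h2 := measure_union_le (μ := P) S Sᶜ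
    rw [Set.union_compl_self] at h2
    calc (1:ℝ≥0∞) = P Set.univ := (measure_univ).symm
    _ ≤ P S + P Sᶜ := h2
  calc 1 - (ENNReal.ofReal (1 - ε)) ^ N ≤ 1 - P Sᶜ := tsub_le_tsub_left hcomp 1
  _ ≤ P S := tsub_le_iff_right.mpr h1
end
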